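/- If an n-distance d on X is nonincreasing under identification of variables (d(x₁,…,x_{n-1},xₙ) ≥ d(x₁,…,x_{n-1},x₁) for all arguments), then d is repetition invariant: whenever {x₁,…,xₙ} = {x'₁,…,x'ₙ} as sets, d(x₁,…,xₙ) = d(x'₁,…,x'ₙ). -/

import Mathlib

open Finset Function

/-- `d` is an `n`-distance: nonnegative, vanishing exactly on constant tuples,
symmetric, and satisfying the simplex inequality. -/
structure IsNDistance {X : Type*} {n : ℕ} (d : (Fin n → X) → ℝ) : Prop where
  nonneg : ∀ x, 0 ≤ d x
  eq_zero_iff : ∀ x, d x = 0 ↔ ∀ i j : Fin n, x i = x j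
  symm : ∀ (x : Fin n → X) (σ : Equiv.Perm (Fin n)), d (x ∘ σ) = d x
  simplex : ∀ (x : Fin n → X) (z : X), d x ≤ ∑ i, d (Function.update x i z)

section Aux
variable {X : Type*} {n : ℕ}

/-- L1: identifying variable i with value at j cannot increase d. -/
lemma aux_update_le (hn : 2 ≤ n) (d : (Fin n → X) → ℝ) (hd : IsNDistance d)
    (hni : ∀ x : Fin n → X,
      d (Function.update x ⟨n - 1, Nat.sub_lt (Nat.lt_of_lt_of_le Nat.zero_lt_two hn) Nat.one_pos⟩
        (x ⟨0, Nat.lt_of_lt_of_le Nat.zero_lt_two hn⟩)) ≤ d x)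
    (x : Fin n → X) (i j : Fin n) (hij : i ≠ j) :
    d (Function.update x i (x j)) ≤ d x := by
  classical
  set lst : Fin n := ⟨n - 1, by omega⟩ with hlst
  set z0 : Fin n := ⟨0, by omega⟩ with hz0
  have hlz : lst ≠ z0 := by
    simp only [hlst, hz0, Fin.mk.injEq, ne_eq]
    omega
  set c : Fin n := Equiv.swap lst i z0 with hc
  have hci : c ≠ i := by
    rcases eq_or_ne z0 i with h | h
    · rw [hc, h, Equiv.swap_apply_right]
      intro hli; exact hlz (hli.trans h.symm)
    · rw [hc, Equiv.swap_apply_of_ne_of_ne hlz.symm h]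
      exact h
  set σ : Equiv.Perm (Fin n) := (Equiv.swap lst i).trans (Equiv.swap c j) with hσ
  have hσl : σ lst = i := by
    simp only [hσ, Equiv.trans_apply, Equiv.swap_apply_left]
    exact Equiv.swap_apply_of_ne_of_ne hci.symm hij
  have hσ0 : σ z0 = j := by
    simp only [hσ, Equiv.trans_apply, ← hc, Equiv.swap_apply_left]
  have key := hni (x ∘ σ)
  have h1 : (x ∘ σ) z0 = x j := by simp [hσ0]
  have hsym : σ.symm i = lst := by rw [← hσl, Equiv.symm_apply_apply]
  have h2 : Function.update (x ∘ σ) lst ((x ∘ σ) z0)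
      = Function.update x i (x j) ∘ σ := by
    rw [h1, ← hsym]
    exact (Function.update_comp_equiv x σ i (x j)).symm
  rw [h2, hd.symm (Function.update x i (x j)) σ, hd.symm x σ] at key
  exact key

/-- L2: if x i is repeated and b is in the range, replacing x i by b keeps d. -/
lemma aux_update_eq (hn : 2 ≤ n) (d : (Fin n → X) → ℝ) (hd : IsNDistance d)
    (hni : ∀ x : Fin n → X,
      d (Function.update x ⟨n - 1, Nat.sub_lt (Nat.lt_of_lt_of_le Nat.zero_lt_two hn) Nat.one_pos⟩
        (x ⟨0, Nat.lt_of_lt_of_le Nat.zero_lt_two hn⟩)) ≤ d x)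
    (x : Fin n → X) (i j : Fin n) (hij : i ≠ j) (hxij : x i = x j)
    (b : X) (hb : b ∈ Set.range x) :
    d (Function.update x i b) = d x := by
  classical
  rcases eq_or_ne b (x i) with rfl | hne
  · rw [Function.update_eq_self]
  · obtain ⟨k, hk⟩ := hb
    have hik : i ≠ k := by rintro rfl; exact hne hk.symm
    apply le_antisymm
    · rw [← hk]; exact aux_update_le hn d hd hni x i k hik
    · set x' := Function.update x i b with hx'
      have hxj' : x' j = x i := by
        rw [hx', Function.update_of_ne (Ne.symm hij) b x, hxij]
      have hxx : Function.update x' i (x' j) = x := by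
        rw [hxj', hx', Function.update_idem, Function.update_eq_self]
      have := aux_update_le hn d hd hni x' i j hij
      rwa [hxx] at this

end Aux

/-- Nonincreasingness under identification of variables implies repetition invariance. -/
theorem repetition_invariant_of_nonincreasing {X : Type*} {n : ℕ} (hn : 2 ≤ n)
    (d : (Fin n → X) → ℝ) (hd : IsNDistance d)
    (hni : ∀ x : Fin n → X,
      d (Function.update x ⟨n - 1, by omega⟩ (x ⟨0, by omega⟩)) ≤ d x) :
    ∀ x y : Fin n → X, Set.range x = Set.range y → d x = d y := by
  classical
  set M : (Fin n → X) → Multiset X := fun x => (List.ofFn x : Multiset X) with hM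
  have hMcard : ∀ x : Fin n → X, Multiset.card (M x) = n := by
    intro x; simp [hM]
  have hmem : ∀ (x : Fin n → X) (a : X), a ∈ M x ↔ a ∈ Set.range x := by
    intro x a; simp [hM, List.mem_ofFn]
  have hM' : ∀ z : Fin n → X, M z = Multiset.map z (Finset.univ : Finset (Fin n)).val := by
    intro z
    rw [hM]
    simp only [List.ofFn_eq_map]
    rw [show ((Finset.univ : Finset (Fin n)).val) = (↑(List.finRange n) : Multiset (Fin n)) from rfl]
    simp [Multiset.map_coe]
  have hsplit : ∀ (x : Fin n → X) (i : Fin n) (b : X),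
      ∃ t : Multiset X, M x = x i ::ₘ t ∧ M (Function.update x i b) = b ::ₘ t := by
    intro x i b
    have hmemu : i ∈ (Finset.univ : Finset (Fin n)).val := by simp
    have huniv : (Finset.univ : Finset (Fin n)).val
        = i ::ₘ ((Finset.univ : Finset (Fin n)).val.erase i) :=
      (Multiset.cons_erase hmemu).symm
    refine ⟨Multiset.map x (((Finset.univ : Finset (Fin n)).val).erase i), ?_, ?_⟩
    · rw [hM' x]
      conv_lhs => rw [huniv]
      rw [Multiset.map_cons]
    · rw [hM' (Function.update x i b)]
      conv_lhs => rw [huniv]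
      rw [Multiset.map_cons, Function.update_self]
      congr 1
      refine Multiset.map_congr rfl ?_
      intro j hj
      have hji : j ≠ i := by
        rintro rfl
        exact (Multiset.Nodup.notMem_erase (Finset.univ.nodup)) hj
      exact Function.update_of_ne hji b x
  have hperm : ∀ x y : Fin n → X, M x = M y → d x = d y := by
    intro x y h
    letI : LinearOrder X := linearOrderOfSTO WellOrderingRel
    have hp : List.Perm (List.ofFn x) (List.ofFn y) := Multiset.coe_eq_coe.mp h
    have h2 : List.Perm (List.ofFn (x ∘ Tuple.sort x)) (List.ofFn (y ∘ Tuple.sort y)) :=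
      ((Equiv.Perm.ofFn_comp_perm _ x).trans hp).trans
        (Equiv.Perm.ofFn_comp_perm (Tuple.sort y) y).symm
    have h3 : x ∘ Tuple.sort x = y ∘ Tuple.sort y :=
      List.ofFn_injective (List.Perm.eq_of_sortedLE
        (Tuple.monotone_sort x).sortedLE_ofFn (Tuple.monotone_sort y).sortedLE_ofFn h2)
    calc d x = d (x ∘ Tuple.sort x) := (hd.symm x _).symm
      _ = d (y ∘ Tuple.sort y) := by rw [h3]
      _ = d y := hd.symm y _
  suffices H : ∀ (k : ℕ) (x y : Fin n → X),
      Multiset.card (M x - M y) = k → Set.range x = Set.range y → d x = d y by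
    intro x y h; exact H _ x y rfl h
  intro k
  induction k using Nat.strong_induction_on with
  | _ k ih =>
    intro x y hk hr
    by_cases h0 : M x - M y = 0
    · refine hperm x y ?_
      refine Multiset.eq_of_le_of_card_le (tsub_eq_zero_iff_le.mp h0) ?_
      rw [hMcard, hMcard]
    · obtain ⟨a, ha⟩ := Multiset.exists_mem_of_ne_zero h0
      have hcs := Multiset.count_sub a (M x) (M y)
      have hapos : 0 < Multiset.count a (M x - M y) := Multiset.count_pos.mpr ha
      have hax : Multiset.count a (M y) < Multiset.count a (M x) := by omega
      have hamx : a ∈ M x := Multiset.count_pos.mp (by omega)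
      have hay : a ∈ M y := by
        rw [hmem, ← hr, ← hmem]; exact hamx
      have h2 : 2 ≤ Multiset.count a (M x) := by
        have := Multiset.count_pos.mpr hay; omega
      -- find i with x i = a
      obtain ⟨i, hxi⟩ : ∃ i, x i = a := (hmem x a).mp hamx
      -- find j ≠ i with x j = a
      obtain ⟨t, hMx, _⟩ := hsplit x i a
      rw [hxi] at hMx
      have hat : a ∈ t := by
        have h3 := h2
        rw [hMx, Multiset.count_cons_self] at h3
        exact Multiset.count_pos.mp (by omega)
      have ht' : t = Multiset.map x (((Finset.univ : Finset (Fin n)).val).erase i) := by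
        have h1 := hMx
        rw [hM' x] at h1
        have hmemu : i ∈ (Finset.univ : Finset (Fin n)).val := by simp
        conv_lhs at h1 => rw [(Multiset.cons_erase hmemu).symm]
        rw [Multiset.map_cons, hxi] at h1
        exact (Multiset.cons_inj_right a).mp h1.symm
      obtain ⟨j, hjmem, hxj⟩ := Multiset.mem_map.mp (ht' ▸ hat)
      have hij : i ≠ j := by
        rintro rfl
        exact (Multiset.Nodup.notMem_erase (Finset.univ.nodup)) hjmem
      -- find b with count b (M x) < count b (M y)
      obtain ⟨b, hb⟩ : ∃ b, Multiset.count b (M x) < Multiset.count b (M y) := by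
        by_contra hcon
        push_neg at hcon
        have hle : M y ≤ M x := Multiset.le_iff_count.mpr hcon
        have : M y = M x := Multiset.eq_of_le_of_card_le hle (by rw [hMcard, hMcard])
        rw [this] at hax; omega
      have hbmy : b ∈ M y := Multiset.count_pos.mp (by omega)
      have hbx : b ∈ Set.range x := by rw [hr, ← hmem]; exact hbmy
      have hab : a ≠ b := by rintro rfl; omega
      set x' := Function.update x i b with hx'
      have hdeq : d x' = d x :=
        aux_update_eq hn d hd hni x i j hij (by rw [hxi, hxj]) b hbx
      have hrange : Set.range x' = Set.range x := by
        ext v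
        constructor
        · rintro ⟨c, rfl⟩
          by_cases hc : c = i
          · subst hc
            rw [hx', Function.update_self]
            exact hbx
          · exact ⟨c, (Function.update_of_ne hc b x).symm⟩
        · rintro ⟨c, rfl⟩
          by_cases hc : c = i
          · subst hc
            refine ⟨j, ?_⟩
            rw [hx', Function.update_of_ne (Ne.symm hij) b x, hxj, hxi]
          · exact ⟨c, Function.update_of_ne hc b x⟩
      obtain ⟨s, hMxs, hMx's⟩ := hsplit x i b
      have hcntx : ∀ c, Multiset.count c (M x) = Multiset.count c s + if c = a then 1 else 0 := by
        intro c
        rw [hMxs, Multiset.count_cons, hxi]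
      have hcntx' : ∀ c, Multiset.count c (M x') = Multiset.count c s + if c = b then 1 else 0 := by
        intro c
        rw [hx', hMx's, Multiset.count_cons]
      have hle : M x' - M y ≤ M x - M y := by
        rw [Multiset.le_iff_count]
        intro c
        rw [Multiset.count_sub, Multiset.count_sub]
        have h1 := hcntx c
        have h2 := hcntx' c
        by_cases hca : c = a <;> by_cases hcb : c = b
        · exact absurd (hca ▸ hcb) hab
        · rw [if_pos hca] at h1
          rw [if_neg hcb] at h2
          omega
        · rw [if_neg hca] at h1
          rw [if_pos hcb] at h2
          subst hcb
          omega
        · rw [if_neg hca] at h1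
          rw [if_neg hcb] at h2
          omega
      have hne2 : M x' - M y ≠ M x - M y := by
        intro hcontra
        have hca := congrArg (Multiset.count a) hcontra
        rw [Multiset.count_sub, Multiset.count_sub] at hca
        have h1 := hcntx a
        have h2' := hcntx' a
        rw [if_pos rfl] at h1
        rw [if_neg hab] at h2'
        omega
      have hlt : Multiset.card (M x' - M y) < k :=
        hk ▸ Multiset.card_lt_card (lt_of_le_of_ne hle hne2)
      calc d x = d x' := hdeq.symm
        _ = d y := ih _ hlt x' y rfl (hrange.trans hr)
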